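/- Let X : [0,1] → ℝ^{N×M} and x̄ : [0,1] → ℝᴺ be differentiable, with X(s)·1 = 0 for all s, X satisfying dX/ds = − (1/(2(M−1))) X Xᵀ Hᵀ R⁻¹ H X and x̄ satisfying dx̄/ds = − (1/(M−1)) X Xᵀ Hᵀ R⁻¹ (H x̄ − y). Define X̄(s) := X(s) + x̄(s)·1ᵀ. Then X̄(I − U) = X, M⁻¹ X̄ 1 = x̄, and X̄ satisfies the BR10 ensemble equation dX̄/ds = − (1/(M−1)) · X̄ (I − U) X̄ᵀ Hᵀ R⁻¹ [ (1/2) H X̄ (I + U) − y·1ᵀ ]. -/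

import Mathlib

open Matrix

attribute [local instance] Matrix.normedAddCommGroup Matrix.normedSpace

section helpers

variable {m n k : Type*} [Fintype m] [Fintype n] [Fintype k]

lemma mul_vecMulVec' (A : Matrix k m ℝ) (u : m → ℝ) (v : n → ℝ) :
    A * vecMulVec u v = vecMulVec (A *ᵥ u) v := by
  ext i j
  simp [Matrix.mul_apply, vecMulVec_apply, Matrix.mulVec, dotProduct,
    Finset.sum_mul, mul_assoc]

lemma vecMulVec_transpose' (u : m → ℝ) (v : n → ℝ) :
    (vecMulVec u v)ᵀ = vecMulVec v u := by
  ext i j; simp [vecMulVec_apply, mul_comm]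

lemma vecMulVec_mulVec' (u : m → ℝ) (v : n → ℝ) (w : n → ℝ) :
    vecMulVec u v *ᵥ w = (v ⬝ᵥ w) • u := by
  ext i
  simp only [Matrix.mulVec, vecMulVec_apply, dotProduct, Pi.smul_apply, smul_eq_mul,
    Finset.sum_mul]
  exact Finset.sum_congr rfl fun _ _ => by ring

lemma vecMulVec_add_left' (u w : m → ℝ) (v : n → ℝ) :
    vecMulVec (u + w) v = vecMulVec u v + vecMulVec w v := by
  ext i j; simp [vecMulVec_apply, add_mul]

lemma vecMulVec_sub_left' (u w : m → ℝ) (v : n → ℝ) :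
    vecMulVec (u - w) v = vecMulVec u v - vecMulVec w v := by
  ext i j; simp [vecMulVec_apply, sub_mul]

lemma vecMulVec_smul_left' (c : ℝ) (u : m → ℝ) (v : n → ℝ) :
    vecMulVec (c • u) v = c • vecMulVec u v := by
  ext i j; simp [vecMulVec_apply, mul_assoc]

lemma vecMulVec_zero_left' (v : n → ℝ) :
    vecMulVec (0 : m → ℝ) v = 0 := by
  ext i j; simp [vecMulVec_apply]

end helpers

/-- `vecMulVec · one` as a continuous linear map. -/
noncomputable def vmvCLM {N M : ℕ} (one : Fin M → ℝ) :
    (Fin N → ℝ) →L[ℝ] Matrix (Fin N) (Fin M) ℝ :=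
  LinearMap.toContinuousLinearMap
    { toFun := fun u => vecMulVec u one
      map_add' := fun u w => vecMulVec_add_left' u w one
      map_smul' := fun c u => vecMulVec_smul_left' c u one }

/-- If `X` (mean-zero perturbations) solves `dX/ds = −(1/(2(M−1))) X Xᵀ Hᵀ R⁻¹ H X` and
`x̄` (the mean) solves `dx̄/ds = −(1/(M−1)) X Xᵀ Hᵀ R⁻¹ (H x̄ − y)`, then the full ensemble
`X̄(s) := X(s) + x̄(s)·1ᵀ` satisfies `X̄(I−U) = X`, `M⁻¹ X̄ 1 = x̄`, and the BR10 equation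
`dX̄/ds = −(1/(M−1)) X̄ (I−U) X̄ᵀ Hᵀ R⁻¹ [ (1/2) H X̄ (I+U) − y·1ᵀ ]`. -/
theorem stmt_10 {N L M : ℕ} (hM : 2 ≤ M)
    (H : Matrix (Fin L) (Fin N) ℝ) (R : Matrix (Fin L) (Fin L) ℝ) (hR : R.PosDef)
    (y : Fin L → ℝ)
    (one : Fin M → ℝ) (hone : one = fun _ => 1)
    (U : Matrix (Fin M) (Fin M) ℝ) (hU : U = (M : ℝ)⁻¹ • vecMulVec one one)
    (X : ℝ → Matrix (Fin N) (Fin M) ℝ) (xbar : ℝ → Fin N → ℝ)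
    (hzero : ∀ s ∈ Set.Icc (0:ℝ) 1, X s *ᵥ one = 0)
    (hX : ∀ s ∈ Set.Icc (0:ℝ) 1,
      HasDerivWithinAt X
        (-(1 / (2 * ((M : ℝ) - 1))) • (X s * (X s)ᵀ * Hᵀ * R⁻¹ * H * X s))
        (Set.Icc 0 1) s)
    (hxbar : ∀ s ∈ Set.Icc (0:ℝ) 1,
      HasDerivWithinAt xbar
        (-(1 / ((M : ℝ) - 1)) • ((X s * (X s)ᵀ * Hᵀ * R⁻¹) *ᵥ (H *ᵥ xbar s - y)))
        (Set.Icc 0 1) s)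
    (Xbar : ℝ → Matrix (Fin N) (Fin M) ℝ)
    (hXbar : ∀ s : ℝ, Xbar s = X s + vecMulVec (xbar s) one) :
    (∀ s ∈ Set.Icc (0:ℝ) 1, Xbar s * (1 - U) = X s) ∧
    (∀ s ∈ Set.Icc (0:ℝ) 1, (M : ℝ)⁻¹ • (Xbar s *ᵥ one) = xbar s) ∧
    (∀ s ∈ Set.Icc (0:ℝ) 1,
      HasDerivWithinAt Xbar
        (-(1 / ((M : ℝ) - 1)) • (Xbar s * (1 - U) * (Xbar s)ᵀ * Hᵀ * R⁻¹ *
          ((1 / 2 : ℝ) • (H * Xbar s * (1 + U)) - vecMulVec y one)))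
        (Set.Icc 0 1) s) := by
  have hMpos : (0 : ℝ) < (M : ℝ) := by
    have : (0 : ℕ) < M := by omega
    exact_mod_cast this
  have hMne : (M : ℝ) ≠ 0 := ne_of_gt hMpos
  have hdot : one ⬝ᵥ one = (M : ℝ) := by
    subst hone; simp [dotProduct]
  -- Xbar * U = vecMulVec (xbar s) one
  have hXU : ∀ s ∈ Set.Icc (0:ℝ) 1, Xbar s * U = vecMulVec (xbar s) one := by
    intro s hs
    rw [hXbar, hU, Matrix.mul_smul, Matrix.add_mul, mul_vecMulVec', hzero s hs,
      vecMulVec_zero_left', mul_vecMulVec', vecMulVec_mulVec', hdot, zero_add,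
      vecMulVec_smul_left', smul_smul, inv_mul_cancel₀ hMne, one_smul]
  have part1 : ∀ s ∈ Set.Icc (0:ℝ) 1, Xbar s * (1 - U) = X s := by
    intro s hs
    rw [Matrix.mul_sub, Matrix.mul_one, hXU s hs, hXbar, add_sub_cancel_right]
  have part2 : ∀ s ∈ Set.Icc (0:ℝ) 1, (M : ℝ)⁻¹ • (Xbar s *ᵥ one) = xbar s := by
    intro s hs
    rw [hXbar, Matrix.add_mulVec, hzero s hs, vecMulVec_mulVec', hdot, zero_add,
      smul_smul, inv_mul_cancel₀ hMne, one_smul]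
  refine ⟨part1, part2, ?_⟩
  intro s hs
  have hXb : Xbar = fun t => X t + vecMulVec (xbar t) one := funext hXbar
  -- the derivative of the second summand
  have hd2 : HasDerivWithinAt (fun t => vecMulVec (xbar t) one)
      (vecMulVec (-(1 / ((M : ℝ) - 1)) • ((X s * (X s)ᵀ * Hᵀ * R⁻¹) *ᵥ (H *ᵥ xbar s - y))) one)
      (Set.Icc 0 1) s := by
    have := (vmvCLM (N := N) one).hasFDerivAt.comp_hasDerivWithinAt s (hxbar s hs)
    exact this
  have hderiv := (hX s hs).add hd2
  -- now show the two derivative values coincide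
  have key : (-(1 / (2 * ((M : ℝ) - 1))) • (X s * (X s)ᵀ * Hᵀ * R⁻¹ * H * X s) +
      vecMulVec (-(1 / ((M : ℝ) - 1)) • ((X s * (X s)ᵀ * Hᵀ * R⁻¹) *ᵥ (H *ᵥ xbar s - y))) one)
      = (-(1 / ((M : ℝ) - 1)) • (Xbar s * (1 - U) * (Xbar s)ᵀ * Hᵀ * R⁻¹ *
          ((1 / 2 : ℝ) • (H * Xbar s * (1 + U)) - vecMulVec y one))) := by
    have hA : Xbar s * (1 - U) = X s := part1 s hs
    have hAT : X s * (Xbar s)ᵀ = X s * (X s)ᵀ := by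
      rw [hXbar, Matrix.transpose_add, vecMulVec_transpose', Matrix.mul_add,
        mul_vecMulVec', hzero s hs, vecMulVec_zero_left', add_zero]
    have hbr : Xbar s * (1 + U) = X s + (2 : ℝ) • vecMulVec (xbar s) one := by
      rw [Matrix.mul_add, Matrix.mul_one, hXU s hs, hXbar]
      ext i j
      simp [vecMulVec_apply]; ring
    rw [hA, Matrix.mul_assoc (X s), hAT, ← Matrix.mul_assoc (X s)]
    set P := X s * (X s)ᵀ * Hᵀ * R⁻¹ with hP
    rw [Matrix.mul_assoc H, hbr]
    have hHX : H * (X s + (2 : ℝ) • vecMulVec (xbar s) one)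
        = H * X s + (2 : ℝ) • vecMulVec (H *ᵥ xbar s) one := by
      rw [Matrix.mul_add, Matrix.mul_smul, mul_vecMulVec']
    rw [hHX]
    have hbracket : (1 / 2 : ℝ) • (H * X s + (2 : ℝ) • vecMulVec (H *ᵥ xbar s) one)
        - vecMulVec y one
        = (1 / 2 : ℝ) • (H * X s) + vecMulVec (H *ᵥ xbar s - y) one := by
      rw [smul_add, smul_smul, vecMulVec_sub_left']
      norm_num
      abel
    rw [hbracket, Matrix.mul_add, Matrix.mul_smul, mul_vecMulVec', smul_add,
      vecMulVec_smul_left']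
    rw [Matrix.mul_assoc P H (X s)]
    congr 1
    rw [smul_smul]
    congr 1
    field_simp
  have hderiv2 : HasDerivWithinAt Xbar
      (-(1 / (2 * ((M : ℝ) - 1))) • (X s * (X s)ᵀ * Hᵀ * R⁻¹ * H * X s) +
        vecMulVec (-(1 / ((M : ℝ) - 1)) • ((X s * (X s)ᵀ * Hᵀ * R⁻¹) *ᵥ (H *ᵥ xbar s - y))) one)
      (Set.Icc 0 1) s := by
    rw [hXb]; exact hderiv
  rw [key] at hderiv2
  exact hderiv2
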